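/- The LTS2 scheme conserves total mass exactly: under the flux-form and locality assumptions, for every coarse step Δt, every M ≥ 1, and every initial state x⁰, one LTS2 step satisfies m(x^new) = m(x⁰), where m(x) = Σ_{i∈Cell} A_i·x_i. -/

import Mathlib

open scoped Classical

/-- The substepping recursion of one LTS2 step. Starting from the state `x0`, the
first-stage vector `x1`, coarse step `Δt` and substep count `M`, it returns the triple
`(a^k, P^k, Q^k)`: the fine solution after `k` substeps (meaningful on `F`), and the two
accumulated interface correction terms (meaningful on `I₁ ∪ I₂`). -/
noncomputable def lts2Sub {ι : Type*} (F I₁ : Set ι)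
    (G : (ι → ℝ) → ι → ℝ) (Δt : ℝ) (M : ℕ) (x0 x1 : ι → ℝ) :
    ℕ → ((ι → ℝ) × (ι → ℝ) × (ι → ℝ))
  | 0 => (x0, fun _ => 0, fun _ => 0)
  | k + 1 =>
    let s := lts2Sub F I₁ G Δt M x0 x1 k
    let a := s.1
    let P := s.2.1
    let Q := s.2.2
    -- v^k: a^k on F, the α-interpolant on I₁, x⁰ on I₂ ∪ C
    let v : ι → ℝ := fun i =>
      if i ∈ F then a i
      else if i ∈ I₁ then (1 - (k : ℝ) / M) * x0 i + ((k : ℝ) / M) * x1 i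
      else x0 i
    -- b^k = v^k + (Δt/M)·G(v^k) (used on F)
    let b : ι → ℝ := fun i => v i + (Δt / M) * G v i
    -- w^k: b^k on F, the β-interpolant on I₁, x¹ on I₂ ∪ C
    let w : ι → ℝ := fun i =>
      if i ∈ F then b i
      else if i ∈ I₁ then
        (1 - ((k : ℝ) + 1) / M) * x0 i + (((k : ℝ) + 1) / M) * x1 i
      else x1 i
    (fun i => (1 / 2) * a i + (1 / 2) * b i + (1 / 2) * (Δt / M) * G w i,
     fun i => P i + G v i,
     fun i => Q i + G w i)

/-- One step of the second-order local time-stepping scheme LTS2, with fine region `F`,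
interface regions `I₁`, `I₂`, coarse region `C`, right-hand side `G`, coarse step `Δt`
and `M` fine substeps per coarse step. -/
noncomputable def lts2Step {ι : Type*} (F I₁ I₂ C : Set ι)
    (G : (ι → ℝ) → ι → ℝ) (Δt : ℝ) (M : ℕ) (x0 : ι → ℝ) : ι → ℝ :=
  -- x¹ = x⁰ + Δt·G(x⁰) on I₁ ∪ I₂ ∪ C, and x¹ = x⁰ on F
  let x1 : ι → ℝ := fun i => if i ∈ F then x0 i else x0 i + Δt * G x0 i
  -- x² = (1/2)x⁰ + (1/2)x¹ + (1/2)Δt·G(x¹) (used on C)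
  let x2 : ι → ℝ := fun i =>
    (1 / 2) * x0 i + (1 / 2) * x1 i + (1 / 2) * Δt * G x1 i
  let s := lts2Sub F I₁ G Δt M x0 x1 M
  fun i =>
    if i ∈ F then s.1 i
    else if i ∈ C then x2 i
    else x0 i + (Δt / M) * ((1 / 2) * s.2.1 i + (1 / 2) * s.2.2 i)

/-- Exact mass conservation for LTS2: if the right-hand side `G` is in flux form on the
cells (TRiSK discrete divergence, with each edge having two distinct incident cells),
and every flux on an edge touching a coarse cell depends only on components in
`I₂ ∪ C`, then one LTS2 step conserves the total mass `m(x) = Σ_{i ∈ Cell} A_i·x_i`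
exactly, for every coarse step `Δt`, every `M ≥ 1` and every initial state `x⁰`. -/
theorem lts2_conserves_total_mass {ι : Type*} [Fintype ι]
    (F I₁ I₂ C : Set ι)
    (hcover : ∀ i : ι, i ∈ F ∨ i ∈ I₁ ∨ i ∈ I₂ ∨ i ∈ C)
    (hFI₁ : F ∩ I₁ = ∅) (hFI₂ : F ∩ I₂ = ∅) (hFC : F ∩ C = ∅)
    (hI₁I₂ : I₁ ∩ I₂ = ∅) (hI₁C : I₁ ∩ C = ∅) (hI₂C : I₂ ∩ C = ∅)
    (G : (ι → ℝ) → ι → ℝ)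
    {Ed : Type*} [Fintype Ed] (Cell : Finset ι)
    (c₁ c₂ : Ed → ι) (hc₁ : ∀ e, c₁ e ∈ Cell) (hc₂ : ∀ e, c₂ e ∈ Cell)
    (hcne : ∀ e, c₁ e ≠ c₂ e)
    (A : ι → ℝ) (hA : ∀ i ∈ Cell, A i ≠ 0)
    (l : Ed → ℝ) (Fl : Ed → (ι → ℝ) → ℝ)
    (hflux : ∀ i ∈ Cell, ∀ x : ι → ℝ, G x i =
      -(1 / A i) * ((∑ e ∈ Finset.univ.filter (fun e => c₁ e = i), l e * Fl e x) -
                    (∑ e ∈ Finset.univ.filter (fun e => c₂ e = i), l e * Fl e x)))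
    (hlocal : ∀ e : Ed, (c₁ e ∈ C ∨ c₂ e ∈ C) →
      ∀ x y : ι → ℝ, (∀ j ∈ I₂ ∪ C, x j = y j) → Fl e x = Fl e y) :
    ∀ (Δt : ℝ) (M : ℕ), 1 ≤ M → ∀ x0 : ι → ℝ,
      ∑ i ∈ Cell, A i * lts2Step F I₁ I₂ C G Δt M x0 i = ∑ i ∈ Cell, A i * x0 i := by

  intro Δt M hM x0
  have hMne : (M : ℝ) ≠ 0 := Nat.cast_ne_zero.mpr (by omega)
  -- total mass of G is zero for any state
  have massG : ∀ y : ι → ℝ, ∑ i ∈ Cell, A i * G y i = 0 := by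
    intro y
    have h1 : ∀ i ∈ Cell, A i * G y i =
        (∑ e ∈ Finset.univ.filter (fun e => c₂ e = i), l e * Fl e y) -
        (∑ e ∈ Finset.univ.filter (fun e => c₁ e = i), l e * Fl e y) := by
      intro i hi
      rw [hflux i hi y]
      have := hA i hi
      field_simp
      ring
    rw [Finset.sum_congr rfl h1, Finset.sum_sub_distrib]
    rw [Finset.sum_fiberwise_of_maps_to (fun e _ => hc₂ e) (fun e => l e * Fl e y),
        Finset.sum_fiberwise_of_maps_to (fun e _ => hc₁ e) (fun e => l e * Fl e y)]
    ring
  have hne' : ∀ {X Y : Set ι}, X ∩ Y = ∅ → ∀ {j : ι}, j ∈ X → j ∈ Y → False := by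
    intro X Y h j hx hy
    rw [Set.eq_empty_iff_forall_notMem] at h
    exact h j ⟨hx, hy⟩
  set x1 : ι → ℝ := fun i => if i ∈ F then x0 i else x0 i + Δt * G x0 i with hx1
  set v : ℕ → ι → ℝ := fun k i =>
    if i ∈ F then (lts2Sub F I₁ G Δt M x0 x1 k).1 i
    else if i ∈ I₁ then (1 - (k : ℝ) / M) * x0 i + ((k : ℝ) / M) * x1 i
    else x0 i with hv
  set w : ℕ → ι → ℝ := fun k i =>
    if i ∈ F then v k i + (Δt / M) * G (v k) i
    else if i ∈ I₁ then
      (1 - ((k : ℝ) + 1) / M) * x0 i + (((k : ℝ) + 1) / M) * x1 i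
    else x1 i with hw
  have hsub : ∀ k, lts2Sub F I₁ G Δt M x0 x1 (k + 1) =
      (fun i => (1/2) * (lts2Sub F I₁ G Δt M x0 x1 k).1 i
        + (1/2) * (v k i + (Δt / M) * G (v k) i) + (1/2) * (Δt / M) * G (w k) i,
       fun i => (lts2Sub F I₁ G Δt M x0 x1 k).2.1 i + G (v k) i,
       fun i => (lts2Sub F I₁ G Δt M x0 x1 k).2.2 i + G (w k) i) := by
    intro k
    rfl
  have hP : ∀ k, (lts2Sub F I₁ G Δt M x0 x1 k).2.1 =
      fun i => ∑ j ∈ Finset.range k, G (v j) i := by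
    intro k
    induction k with
    | zero => funext i; simp [lts2Sub]
    | succ k ih =>
      rw [hsub k]
      funext i
      simp only [ih, Finset.sum_range_succ]
  have hQ : ∀ k, (lts2Sub F I₁ G Δt M x0 x1 k).2.2 =
      fun i => ∑ j ∈ Finset.range k, G (w j) i := by
    intro k
    induction k with
    | zero => funext i; simp [lts2Sub]
    | succ k ih =>
      rw [hsub k]
      funext i
      simp only [ih, Finset.sum_range_succ]
  have ha : ∀ k, ∀ i ∈ F, (lts2Sub F I₁ G Δt M x0 x1 k).1 i =
      x0 i + (Δt / (2 * M)) * ∑ j ∈ Finset.range k, (G (v j) i + G (w j) i) := by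
    intro k
    induction k with
    | zero => intro i _; simp [lts2Sub]
    | succ k ih =>
      intro i hiF
      rw [hsub k]
      have hvk : v k i = (lts2Sub F I₁ G Δt M x0 x1 k).1 i := by
        simp only [hv, if_pos hiF]
      simp only [hvk, ih i hiF, Finset.sum_range_succ]
      ring
  -- the unified per-cell formula
  have hstep : lts2Step F I₁ I₂ C G Δt M x0 = fun i =>
      if i ∈ F then (lts2Sub F I₁ G Δt M x0 x1 M).1 i
      else if i ∈ C then (1/2) * x0 i + (1/2) * x1 i + (1/2) * Δt * G x1 i
      else x0 i + (Δt / M) * ((1/2) * (lts2Sub F I₁ G Δt M x0 x1 M).2.1 i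
        + (1/2) * (lts2Sub F I₁ G Δt M x0 x1 M).2.2 i) := rfl
  have hmain : ∀ i ∈ Cell, lts2Step F I₁ I₂ C G Δt M x0 i =
      x0 i + (Δt / (2 * M)) * ∑ j ∈ Finset.range M, (G (v j) i + G (w j) i) := by
    intro i hi
    rcases hcover i with hiF | hiI1 | hiI2 | hiC
    · rw [hstep]
      simp only [if_pos hiF]
      exact ha M i hiF
    · have hiF : i ∉ F := fun h => (hne' hFI₁ h hiI1).elim
      have hiC : i ∉ C := fun h => (hne' hI₁C hiI1 h).elim
      rw [hstep]
      simp only [if_neg hiF, if_neg hiC, hP M, hQ M]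
      rw [Finset.sum_add_distrib]
      ring
    · have hiF : i ∉ F := fun h => (hne' hFI₂ h hiI2).elim
      have hiC : i ∉ C := fun h => (hne' hI₂C hiI2 h).elim
      rw [hstep]
      simp only [if_neg hiF, if_neg hiC, hP M, hQ M]
      rw [Finset.sum_add_distrib]
      ring
    · have hiF : i ∉ F := fun h => (hne' hFC h hiC).elim
      -- locality: on coarse cells, G(v j) = G(x0) and G(w j) = G(x1)
      have hagv : ∀ j, ∀ jj ∈ I₂ ∪ C, v j jj = x0 jj := by
        intro j jj hjj
        have hjF : jj ∉ F := by
          rcases hjj with h | h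
          · exact fun hf => (hne' hFI₂ hf h).elim
          · exact fun hf => (hne' hFC hf h).elim
        have hjI1 : jj ∉ I₁ := by
          rcases hjj with h | h
          · exact fun hf => (hne' hI₁I₂ hf h).elim
          · exact fun hf => (hne' hI₁C hf h).elim
        simp only [hv, if_neg hjF, if_neg hjI1]
      have hagw : ∀ j, ∀ jj ∈ I₂ ∪ C, w j jj = x1 jj := by
        intro j jj hjj
        have hjF : jj ∉ F := by
          rcases hjj with h | h
          · exact fun hf => (hne' hFI₂ hf h).elim
          · exact fun hf => (hne' hFC hf h).elim
        have hjI1 : jj ∉ I₁ := by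
          rcases hjj with h | h
          · exact fun hf => (hne' hI₁I₂ hf h).elim
          · exact fun hf => (hne' hI₁C hf h).elim
        simp only [hw, if_neg hjF, if_neg hjI1]
      have hGv : ∀ j, G (v j) i = G x0 i := by
        intro j
        rw [hflux i hi, hflux i hi]
        congr 1
        congr 1
        · refine Finset.sum_congr rfl fun e he => ?_
          rw [hlocal e (Or.inl ((Finset.mem_filter.mp he).2 ▸ hiC)) _ _ (hagv j)]
        · refine Finset.sum_congr rfl fun e he => ?_
          rw [hlocal e (Or.inr ((Finset.mem_filter.mp he).2 ▸ hiC)) _ _ (hagv j)]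
      have hGw : ∀ j, G (w j) i = G x1 i := by
        intro j
        rw [hflux i hi, hflux i hi]
        congr 1
        congr 1
        · refine Finset.sum_congr rfl fun e he => ?_
          rw [hlocal e (Or.inl ((Finset.mem_filter.mp he).2 ▸ hiC)) _ _ (hagw j)]
        · refine Finset.sum_congr rfl fun e he => ?_
          rw [hlocal e (Or.inr ((Finset.mem_filter.mp he).2 ▸ hiC)) _ _ (hagw j)]
      have hsum : ∑ j ∈ Finset.range M, (G (v j) i + G (w j) i)
          = (M : ℝ) * (G x0 i + G x1 i) := by
        rw [Finset.sum_congr rfl fun j _ => by rw [hGv j, hGw j]]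
        rw [Finset.sum_const, Finset.card_range, nsmul_eq_mul]
      rw [hstep]
      simp only [if_neg hiF, if_pos hiC, hsum]
      have hx1i : x1 i = x0 i + Δt * G x0 i := by
        simp only [hx1, if_neg hiF]
      rw [hx1i]
      field_simp
      ring
  calc ∑ i ∈ Cell, A i * lts2Step F I₁ I₂ C G Δt M x0 i
      = ∑ i ∈ Cell, (A i * x0 i
          + (Δt / (2 * M)) * ∑ j ∈ Finset.range M, (A i * G (v j) i + A i * G (w j) i)) := by
        refine Finset.sum_congr rfl fun i hi => ?_
        have hS : ∑ j ∈ Finset.range M, (A i * G (v j) i + A i * G (w j) i)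
            = A i * ∑ j ∈ Finset.range M, (G (v j) i + G (w j) i) := by
          rw [Finset.mul_sum]
          exact Finset.sum_congr rfl fun j _ => by ring
        rw [hmain i hi, hS]
        ring
    _ = ∑ i ∈ Cell, A i * x0 i := by
        rw [Finset.sum_add_distrib]
        have : ∑ i ∈ Cell, (Δt / (2 * M)) *
            ∑ j ∈ Finset.range M, (A i * G (v j) i + A i * G (w j) i) = 0 := by
          rw [← Finset.mul_sum, Finset.sum_comm]
          have : ∀ j ∈ Finset.range M,
              ∑ i ∈ Cell, (A i * G (v j) i + A i * G (w j) i) = 0 := by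
            intro j _
            rw [Finset.sum_add_distrib, massG (v j), massG (w j)]
            ring
          rw [Finset.sum_congr rfl this, Finset.sum_const, smul_zero, mul_zero]
        rw [this, add_zero]
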